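/- Let Z be an integrable real random variable and τ ∈ ℝ with q = Pr[Z ≤ τ] > 0. Then for every measurable set B with Pr[Z ∈ B] ≥ q, E[Z | Z ≤ τ] ≤ E[Z | Z ∈ B]; that is, among all events of probability at least q, conditioning on the lower tail {Z ≤ τ} minimizes the conditional expectation. -/

import Mathlib

open MeasureTheory ProbabilityTheory

/-- Conditional expectation of `Z` given an event `A`: `E[Z·1_A] / Pr[A]`. -/
noncomputable def condMean {Ω : Type*} [MeasureSpace Ω] (Z : Ω → ℝ) (A : Set Ω) : ℝ :=
  (∫ ω in A, Z ω) / (ℙ A).toReal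

/-- **The lower tail minimizes the conditional expectation.**
Let `Z` be integrable and `τ ∈ ℝ` with `q = Pr[Z ≤ τ] > 0`.  Then for every measurable
`B ⊆ ℝ` with `Pr[Z ∈ B] ≥ q`, `E[Z | Z ≤ τ] ≤ E[Z | Z ∈ B]`. -/
theorem condMean_lower_tail_le
    {Ω : Type*} [MeasureSpace Ω] [IsProbabilityMeasure (ℙ : Measure Ω)]
    (Z : Ω → ℝ) (hZ : Integrable Z) (hZm : Measurable Z)
    (τ : ℝ) (q : ℝ) (hq : q = (ℙ {ω | Z ω ≤ τ}).toReal) (hq0 : 0 < q)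
    (B : Set ℝ) (hB : MeasurableSet B) (hBq : q ≤ (ℙ (Z ⁻¹' B)).toReal) :
    condMean Z {ω | Z ω ≤ τ} ≤ condMean Z (Z ⁻¹' B) := by
  set A : Set Ω := {ω | Z ω ≤ τ} with hAdef
  set C : Set Ω := Z ⁻¹' B with hCdef
  have hA : MeasurableSet A := measurableSet_le hZm measurable_const
  have hC : MeasurableSet C := hZm hB
  -- real numbers
  set m : ℝ := (ℙ (A ∩ C)).toReal with hm
  set p : ℝ := (ℙ (A \ C)).toReal with hp
  set r : ℝ := (ℙ (C \ A)).toReal with hr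
  have hfin : ∀ s : Set Ω, ℙ s ≠ ⊤ := fun s => measure_ne_top ℙ s
  have hqA : (ℙ A).toReal = m + p := by
    rw [hm, hp, ← ENNReal.toReal_add (hfin _) (hfin _), measure_inter_add_diff A hC]
  have hqC : (ℙ C).toReal = m + r := by
    rw [hm, hr, Set.inter_comm, ← ENNReal.toReal_add (hfin _) (hfin _),
      measure_inter_add_diff C hA]
  have hm0 : 0 ≤ m := ENNReal.toReal_nonneg
  have hp0 : 0 ≤ p := ENNReal.toReal_nonneg
  have hr0 : 0 ≤ r := ENNReal.toReal_nonneg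
  have hqApos : 0 < m + p := by rw [← hqA, ← hq]; exact hq0
  have hqCpos : 0 < m + r := by rw [← hqC]; exact lt_of_lt_of_le hq0 hBq
  have hrp : p ≤ r := by
    have h1 := hBq
    rw [hq, hqA, hqC] at h1
    linarith
  -- integral splits
  set a : ℝ := ∫ ω in A ∩ C, Z ω with ha
  set u : ℝ := ∫ ω in A \ C, Z ω with hu
  set v : ℝ := ∫ ω in C \ A, Z ω with hv
  have hIA : (∫ ω in A, Z ω) = a + u := by
    rw [ha, hu, integral_inter_add_diff hC hZ.integrableOn]
  have hIC : (∫ ω in C, Z ω) = a + v := by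
    rw [ha, hv, Set.inter_comm, integral_inter_add_diff hA hZ.integrableOn]
  -- bounds
  have hconst : ∀ s : Set Ω, (∫ _ω in s, τ) = (ℙ s).toReal * τ := by
    intro s; rw [setIntegral_const, smul_eq_mul]; rfl
  have hAle : a + u ≤ τ * (m + p) := by
    rw [← hIA, ← hqA]
    calc (∫ ω in A, Z ω) ≤ ∫ _ω in A, τ :=
          setIntegral_mono_on hZ.integrableOn (integrableOn_const (measure_ne_top _ _))
            hA (fun ω hω => hω)
      _ = τ * (ℙ A).toReal := by rw [hconst]; ring
  have hule : u ≤ τ * p := by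
    rw [hu, hp]
    calc (∫ ω in A \ C, Z ω) ≤ ∫ _ω in A \ C, τ :=
          setIntegral_mono_on hZ.integrableOn (integrableOn_const (measure_ne_top _ _))
            (hA.diff hC) (fun ω hω => hω.1)
      _ = τ * (ℙ (A \ C)).toReal := by rw [hconst]; ring
  have hvge : τ * r ≤ v := by
    rw [hv, hr]
    calc τ * (ℙ (C \ A)).toReal = ∫ _ω in C \ A, τ := by rw [hconst]; ring
      _ ≤ ∫ ω in C \ A, Z ω :=
          setIntegral_mono_on (integrableOn_const (measure_ne_top _ _))
            hZ.integrableOn (hC.diff hA) (fun ω hω => le_of_lt (not_le.1 hω.2))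
  -- conclude
  unfold condMean
  rw [hIA, hIC, hqA, hqC, div_le_div_iff₀ hqApos hqCpos]
  nlinarith [mul_nonneg (sub_nonneg.2 hrp) (sub_nonneg.2 hAle),
    mul_nonneg hqApos.le (sub_nonneg.2 hvge),
    mul_nonneg hqApos.le (sub_nonneg.2 hule)]
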